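/- Let (Z_n)_{n∈ℕ} be real-valued random variables on a common probability space and let m ∈ ℕ, m ≥ 1. For j ∈ {1, …, m} and i ∈ ℕ define S_i^j := Σ_{k=1}^i Z_{(k−1)m+j}. Assume that for every j ∈ {1, …, m}, (1/i) S_i^j → 0 in probability as i → ∞. Then (1/n) Σ_{k=1}^n Z_k → 0 in probability as n → ∞. -/

import Mathlib

open MeasureTheory Filter

private lemma div_aux {m : ℕ} (hm : 0 < m) (q s : ℕ) : (q * m + s) / m = q + s / m := by
  rw [add_comm, Nat.add_mul_div_right s q hm, add_comm]

private lemma div_one_aux {m s : ℕ} (h1 : m ≤ s) (h2 : s < 2 * m) : s / m = 1 := by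
  have hm : 0 < m := by omega
  have e : s = 1 * m + (s - m) := by omega
  rw [e, div_aux hm, Nat.div_eq_of_lt (by omega), add_zero]

private lemma sum_split (f : ℕ → ℝ) (m : ℕ) (hm : 1 ≤ m) (n : ℕ) :
    ∑ k ∈ Finset.range n, f (k + 1)
      = ∑ j ∈ Finset.Icc 1 m, ∑ k ∈ Finset.range ((n + m - j) / m), f (k * m + j) := by
  have hm0 : 0 < m := hm
  induction n with
  | zero =>
    refine (Finset.sum_eq_zero fun j hj => ?_).symm
    obtain ⟨hj1, hj2⟩ := Finset.mem_Icc.mp hj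
    rw [Nat.div_eq_of_lt (by omega)]
    simp
  | succ n ih =>
    have hr : n % m < m := Nat.mod_lt _ hm0
    have hq : (n / m) * m + n % m = n := Nat.div_add_mod' n m
    set j0 := n % m + 1 with hj0
    have hj0mem : j0 ∈ Finset.Icc 1 m := Finset.mem_Icc.mpr (by omega)
    have hstep : ∀ j ∈ Finset.Icc 1 m,
        ∑ k ∈ Finset.range ((n + 1 + m - j) / m), f (k * m + j)
          = ∑ k ∈ Finset.range ((n + m - j) / m), f (k * m + j)
            + if j = j0 then f (n + 1) else 0 := by
      intro j hj
      obtain ⟨hj1, hj2⟩ := Finset.mem_Icc.mp hj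
      by_cases hjj : j = j0
      · subst hjj
        have e1 : (n + 1 + m - j0) / m = n / m + 1 := by
          have e : n + 1 + m - j0 = (n / m) * m + m := by omega
          rw [e, div_aux hm0, Nat.div_self hm0]
        have e2 : (n + m - j0) / m = n / m := by
          have e : n + m - j0 = (n / m) * m + (m - 1) := by omega
          have d : (m - 1) / m = 0 := Nat.div_eq_of_lt (by omega)
          rw [e, div_aux hm0, d, add_zero]
        have e3 : (n / m) * m + j0 = n + 1 := by omega
        rw [e1, e2, Finset.sum_range_succ, e3, if_pos rfl]
      · have e : (n + 1 + m - j) / m = (n + m - j) / m := by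
          rcases le_or_gt j (n % m) with hle | hlt
          · have a1 : n + 1 + m - j = (n / m) * m + (n % m + 1 + m - j) := by omega
            have a2 : n + m - j = (n / m) * m + (n % m + m - j) := by omega
            have d1 : (n % m + 1 + m - j) / m = 1 := div_one_aux (by omega) (by omega)
            have d2 : (n % m + m - j) / m = 1 := div_one_aux (by omega) (by omega)
            rw [a1, a2, div_aux hm0, div_aux hm0, d1, d2]
          · have hlt2 : n % m + 2 ≤ j := by omega
            have a1 : n + 1 + m - j = (n / m) * m + (n % m + 1 + m - j) := by omega
            have a2 : n + m - j = (n / m) * m + (n % m + m - j) := by omega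
            have d1 : (n % m + 1 + m - j) / m = 0 := Nat.div_eq_of_lt (by omega)
            have d2 : (n % m + m - j) / m = 0 := Nat.div_eq_of_lt (by omega)
            rw [a1, a2, div_aux hm0, div_aux hm0, d1, d2]
        rw [e, if_neg hjj, add_zero]
    rw [Finset.sum_range_succ, ih, Finset.sum_congr rfl hstep, Finset.sum_add_distrib,
      Finset.sum_ite_eq' (Finset.Icc 1 m) j0 (fun _ => f (n + 1)), if_pos hj0mem]

private lemma c_le {m : ℕ} (hm : 1 ≤ m) {j : ℕ} (hj : 1 ≤ j) (n : ℕ) :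
    (n + m - j) / m ≤ n := by
  have hmn : n ≤ m * n := Nat.le_mul_of_pos_left n hm
  rw [Nat.div_le_iff_le_mul_add_pred (by omega)]
  omega

/-- Interleaving lemma from the proof of Proposition 3: if each of the `m` subsequences
`S_i^j = Σ_{k=1}^i Z_{(k-1)m+j}` (for offsets `j = 1, …, m`) satisfies a weak law of
large numbers with limit `0`, then so does the full interleaved sequence. -/
theorem stmt_4 {Ω : Type*} [MeasurableSpace Ω] (P : Measure Ω) [IsProbabilityMeasure P]
    (Z : ℕ → Ω → ℝ) (m : ℕ) (hm : 1 ≤ m)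
    (h : ∀ j, 1 ≤ j → j ≤ m → ∀ δ > (0 : ℝ), Tendsto
      (fun i : ℕ => P {ω | |(1 / i : ℝ) * ∑ k ∈ Finset.range i, Z (k * m + j) ω| > δ})
      atTop (nhds 0)) :
    ∀ δ > (0 : ℝ), Tendsto
      (fun n : ℕ => P {ω | |(1 / n : ℝ) * ∑ k ∈ Finset.range n, Z (k + 1) ω| > δ})
      atTop (nhds 0) := by
  intro δ hδ
  have hm0 : (0 : ℝ) < m := by exact_mod_cast hm
  have hδm : 0 < δ / m := div_pos hδ hm0
  set c : ℕ → ℕ → ℕ := fun j n => (n + m - j) / m with hc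
  have hbound : ∀ n : ℕ, P {ω | |(1 / n : ℝ) * ∑ k ∈ Finset.range n, Z (k + 1) ω| > δ}
      ≤ ∑ j ∈ Finset.Icc 1 m,
        P {ω | |(1 / (c j n) : ℝ) * ∑ k ∈ Finset.range (c j n), Z (k * m + j) ω| > δ / m} := by
    intro n
    refine le_trans (measure_mono ?_) (measure_biUnion_finset_le _ _)
    intro ω hω
    simp only [Set.mem_setOf_eq] at hω
    by_contra hcon
    simp only [Set.mem_iUnion, Set.mem_setOf_eq, not_exists, not_lt] at hcon
    have key : ∀ j ∈ Finset.Icc 1 m,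
        |(1 / n : ℝ) * ∑ k ∈ Finset.range (c j n), Z (k * m + j) ω| ≤ δ / m := by
      intro j hj
      obtain ⟨hj1, hj2⟩ := Finset.mem_Icc.mp hj
      have hB := hcon j hj
      by_cases hc0 : c j n = 0
      · simp [hc0, le_of_lt hδm]
      · have hc1 : 1 ≤ c j n := Nat.one_le_iff_ne_zero.mpr hc0
        have hcn : c j n ≤ n := c_le hm hj1 n
        have hcpos : (0 : ℝ) < (c j n : ℝ) := by exact_mod_cast hc1
        have hmono : |(1 / n : ℝ) * ∑ k ∈ Finset.range (c j n), Z (k * m + j) ω|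
            ≤ |(1 / (c j n) : ℝ) * ∑ k ∈ Finset.range (c j n), Z (k * m + j) ω| := by
          rw [abs_mul, abs_mul]
          refine mul_le_mul_of_nonneg_right ?_ (abs_nonneg _)
          rw [abs_of_nonneg (by positivity), abs_of_nonneg (by positivity)]
          exact one_div_le_one_div_of_le hcpos (by exact_mod_cast hcn)
        exact le_trans hmono hB
    have hsplit : ∑ k ∈ Finset.range n, Z (k + 1) ω
        = ∑ j ∈ Finset.Icc 1 m, ∑ k ∈ Finset.range (c j n), Z (k * m + j) ω :=
      sum_split (fun t => Z t ω) m hm n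
    have hle : |(1 / n : ℝ) * ∑ k ∈ Finset.range n, Z (k + 1) ω| ≤ δ := by
      calc |(1 / n : ℝ) * ∑ k ∈ Finset.range n, Z (k + 1) ω|
          = |∑ j ∈ Finset.Icc 1 m,
              (1 / n : ℝ) * ∑ k ∈ Finset.range (c j n), Z (k * m + j) ω| := by
            rw [hsplit, Finset.mul_sum]
        _ ≤ ∑ j ∈ Finset.Icc 1 m,
              |(1 / n : ℝ) * ∑ k ∈ Finset.range (c j n), Z (k * m + j) ω| :=
            Finset.abs_sum_le_sum_abs _ _
        _ ≤ ∑ _j ∈ Finset.Icc 1 m, δ / m := Finset.sum_le_sum key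
        _ = δ := by
            rw [Finset.sum_const, Nat.card_Icc]
            simp only [Nat.add_sub_cancel, nsmul_eq_mul]
            field_simp
    exact absurd hω (not_lt.mpr hle)
  have hsum : Tendsto (fun n => ∑ j ∈ Finset.Icc 1 m,
      P {ω | |(1 / (c j n) : ℝ) * ∑ k ∈ Finset.range (c j n), Z (k * m + j) ω| > δ / m})
      atTop (nhds 0) := by
    have h0 : (0 : ENNReal) = ∑ _j ∈ Finset.Icc 1 m, (0 : ENNReal) := by simp
    rw [h0]
    refine tendsto_finset_sum _ fun j hj => ?_
    obtain ⟨hj1, hj2⟩ := Finset.mem_Icc.mp hj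
    have hcj : Tendsto (fun n => c j n) atTop atTop := by
      refine tendsto_atTop_atTop.2 fun b => ⟨b * m, fun n hn => ?_⟩
      rw [hc]
      rw [Nat.le_div_iff_mul_le (show 0 < m by omega)]
      calc b * m ≤ n := hn
        _ ≤ n + m - j := by omega
    exact (h j hj1 hj2 (δ / m) hδm).comp hcj
  exact tendsto_of_tendsto_of_tendsto_of_le_of_le tendsto_const_nhds hsum
    (fun n => zero_le) hbound
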